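/- In any complete meet-continuous modular lattice, every covering is upper regular. -/

import Mathlib

universe u v

/-- `(p.1, p.2)` transposes up to `(q.1, q.2)`. -/
def TransUp {β : Type v} [Lattice β] (p q : β × β) : Prop :=
  p.1 ≤ p.2 ∧ q.1 ≤ q.2 ∧ p.2 ⊓ q.1 = p.1 ∧ p.2 ⊔ q.1 = q.2

/-- Projective equivalence: symmetric transitive closure of the transposes-up relation. -/
def ProjEquiv {β : Type v} [Lattice β] : β × β → β × β → Prop :=
  Relation.EqvGen TransUp

/-- The set of coverings in a chain `C` that are projectively equivalent to `(x, y)`. -/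
def CovIn {β : Type v} [Lattice β] (C : Set β) (x y : β) : Set (β × β) :=
  {p | p.1 ∈ C ∧ p.2 ∈ C ∧ p.1 ⋖ p.2 ∧ ProjEquiv p (x, y)}

/-- Meet-continuity: `a ⊓ ⋁ D = ⋁_{d ∈ D} (a ⊓ d)` for upward-directed `D`. -/
def MeetContinuous (β : Type v) [CompleteLattice β] : Prop :=
  ∀ (a : β) (D : Set β), DirectedOn (· ≤ ·) D → a ⊓ sSup D = ⨆ d ∈ D, a ⊓ d

/-- Upper regularity of a covering `x ⋖ y`. -/
def UpperRegular {β : Type v} [CompleteLattice β] (x y : β) : Prop :=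
  ∀ (I : Type v) [LinearOrder I] [Nonempty I] (f g : I → β),
    (∀ i, f i ⋖ g i) →
    (∀ i, ProjEquiv (f i, g i) (x, y)) →
    (∀ i j : I, i < j → TransUp (f i, g i) (f j, g j)) →
    (⨆ i, f i) ⋖ (⨆ i, g i)

/-- Lower regularity of a covering `x ⋖ y` (the dual of upper regularity). -/
def LowerRegular {β : Type v} [CompleteLattice β] (x y : β) : Prop :=
  ∀ (I : Type v) [LinearOrder I] [Nonempty I] (f g : I → β),
    (∀ i, f i ⋖ g i) →
    (∀ i, ProjEquiv (f i, g i) (x, y)) →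
    (∀ i j : I, i < j → TransUp (f j, g j) (f i, g i)) →
    (⨅ i, f i) ⋖ (⨅ i, g i)

theorem stmt3 {α : Type u} [CompleteLattice α] [IsModularLattice α]
    (hmc : MeetContinuous α) (x y : α) (hxy : x ⋖ y) : UpperRegular x y := by
  intro I _ _ f g hcov hproj htrans
  have hmf : Monotone f := fun i j hij => by
    rcases lt_or_eq_of_le hij with h | h
    · have := (htrans i j h).2.2.1
      calc f i = g i ⊓ f j := this.symm
        _ ≤ f j := inf_le_right
    · exact h ▸ le_rfl
  have hmg : Monotone g := fun i j hij => by
    rcases lt_or_eq_of_le hij with h | h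
    · have := (htrans i j h).2.2.2
      calc g i ≤ g i ⊔ f j := le_sup_left
        _ = g j := this
    · exact h ▸ le_rfl
  set F := ⨆ i, f i with hF
  set G := ⨆ i, g i with hG
  have hfg : ∀ i, f i ≤ g i := fun i => (hcov i).le
  have hFG : F ≤ G := iSup_mono hfg
  have meetf : ∀ a : α, a ⊓ F = ⨆ i, a ⊓ f i := by
    intro a
    have hd : DirectedOn (· ≤ ·) (Set.range f) :=
      (directedOn_range).mpr (hmf.directed_le)
    have h := hmc a (Set.range f) hd
    rw [sSup_range] at h
    rw [hF, h, iSup_range]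
  have meetg : ∀ a : α, a ⊓ G = ⨆ i, a ⊓ g i := by
    intro a
    have hd : DirectedOn (· ≤ ·) (Set.range g) :=
      (directedOn_range).mpr (hmg.directed_le)
    have h := hmc a (Set.range g) hd
    rw [sSup_range] at h
    rw [hG, h, iSup_range]
  have key : ∀ i, g i ⊓ F = f i := by
    intro i
    rw [meetf (g i)]
    apply le_antisymm
    · apply iSup_le; intro j
      rcases le_or_gt j i with h | h
      · exact inf_le_right.trans (hmf h)
      · exact le_of_eq (htrans i j h).2.2.1
    · exact le_iSup_of_le i (le_inf (hfg i) le_rfl)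
  have i0 : I := Classical.arbitrary I
  have hlt : F < G := by
    refine lt_of_le_of_ne hFG ?_
    intro hEq
    have h1 : g i0 ⊓ F = g i0 := inf_eq_left.mpr (hEq ▸ le_iSup g i0)
    exact (hcov i0).lt.ne ((key i0).symm.trans h1)
  refine ⟨hlt, ?_⟩
  intro z hFz hzG
  by_cases hex : ∃ i, g i ≤ z
  · obtain ⟨i, hi⟩ := hex
    refine hzG.not_ge (iSup_le fun j => ?_)
    rcases le_or_gt j i with h | h
    · exact (hmg h).trans hi
    · have := (htrans i j h).2.2.2
      calc g j = g i ⊔ f j := this.symm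
        _ ≤ z := sup_le hi ((le_iSup f j).trans hFz.le)
  · push_neg at hex
    have hall : ∀ i, z ⊓ g i = f i := by
      intro i
      have h1 : f i ≤ z ⊓ g i := le_inf ((le_iSup f i).trans hFz.le) (hfg i)
      rcases (hcov i).eq_or_eq h1 inf_le_right with h | h
      · exact h
      · exact absurd (h ▸ inf_le_left) (hex i)
    have hz : z = F := by
      have h2 : z ⊓ G = z := inf_eq_left.mpr hzG.le
      calc z = z ⊓ G := h2.symm
        _ = ⨆ i, z ⊓ g i := meetg z
        _ = ⨆ i, f i := by simp only [hall]
        _ = F := rfl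
    exact hFz.ne' hz
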